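/- Under the product uncertainty and union-bound assumptions, let X(1:n) and Y(1:n) satisfy the factorization conditions, and suppose the association set 𝒜(Y(1:n);X(1:n)) is empty or all nonzero intersection ratios are classified so that either (X(1:n),Y(1:n)) is disassociated at (0,0) or associated at (1,0). Then the 0-mutual information factorizes exactly: I₀(Y(1:n); X(1:n)) = Σ_{i=1}^n I₀(Y(i); X(i)), where I₀ is the logarithm of the cardinality of the 0-overlap family. (Zero-error mutual information is additive over independent coordinates of a stationary memoryless uncertain channel.) -/

import Mathlib

open Set Real

namespace NSIT

variable {Ω 𝒳 𝒴 : Type*}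

/-- The conditional range `⟦X|y⟧` of an uncertain variable `X` given that the
uncertain variable `Y` takes the value `y`. -/
def condRange (X : Ω → 𝒳) (Y : Ω → 𝒴) (y : 𝒴) : Set 𝒳 :=
  X '' {ω | Y ω = y}

/-- `m` is an uncertainty function: it vanishes on the empty set, is positive (and
finite, being real-valued) on nonempty sets, and is strongly transitive. -/
def IsUncertaintyFn (m : Set 𝒳 → ℝ) : Prop :=
  m ∅ = 0 ∧ (∀ S : Set 𝒳, S.Nonempty → 0 < m S) ∧
    ∀ S₁ S₂ : Set 𝒳, max (m S₁) (m S₂) ≤ m (S₁ ∪ S₂)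

/-- The set of association `𝒜(X;Y)`: all nonzero relative uncertainties of
intersections of two distinct conditional ranges of `X` given values of `Y`. -/
def assocSet (mX : Set 𝒳 → ℝ) (X : Ω → 𝒳) (Y : Ω → 𝒴) : Set ℝ :=
  {r | r ≠ 0 ∧ ∃ y₁ ∈ Set.range Y, ∃ y₂ ∈ Set.range Y, y₁ ≠ y₂ ∧
    r = mX (condRange X Y y₁ ∩ condRange X Y y₂) / mX (Set.range X)}

/-- `X` and `Y` are associated at levels `(δ₁, δ₂)`:
`𝒜(X;Y) ⪯ δ₁` and `𝒜(Y;X) ⪯ δ₂` (vacuously true for empty association sets). -/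
def Associated (mX : Set 𝒳 → ℝ) (mY : Set 𝒴 → ℝ) (X : Ω → 𝒳) (Y : Ω → 𝒴)
    (δ₁ δ₂ : ℝ) : Prop :=
  (∀ r ∈ assocSet mX X Y, r ≤ δ₁) ∧ ∀ r ∈ assocSet mY Y X, r ≤ δ₂

/-- `X` and `Y` are disassociated at levels `(δ₁, δ₂)`:
`𝒜(X;Y) ≻ δ₁` and `𝒜(Y;X) ≻ δ₂` (which in particular requires the association
sets to be nonempty). -/
def Disassociated (mX : Set 𝒳 → ℝ) (mY : Set 𝒴 → ℝ) (X : Ω → 𝒳) (Y : Ω → 𝒴)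
    (δ₁ δ₂ : ℝ) : Prop :=
  (assocSet mX X Y).Nonempty ∧ (∀ r ∈ assocSet mX X Y, δ₁ < r) ∧
    (assocSet mY Y X).Nonempty ∧ ∀ r ∈ assocSet mY Y X, δ₂ < r

/-- `x₁` and `x₂` are `δ`-connected via `⟦X|Y⟧`: there is a finite chain of
conditional ranges joining them whose consecutive intersections have relative
uncertainty greater than `δ`. -/
def Conn (mX : Set 𝒳 → ℝ) (X : Ω → 𝒳) (Y : Ω → 𝒴) (δ : ℝ) (x₁ x₂ : 𝒳) : Prop :=
  ∃ (N : ℕ) (ys : Fin (N + 1) → 𝒴),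
    x₁ ∈ condRange X Y (ys 0) ∧ x₂ ∈ condRange X Y (ys (Fin.last N)) ∧
    ∀ i : Fin N,
      δ < mX (condRange X Y (ys i.succ) ∩ condRange X Y (ys i.castSucc)) /
        mX (Set.range X)

/-- `F` is a `δ`-overlap family (for `X` given `Y`): it covers `⟦X⟧`, each member
is `δ`-connected and contains a singly `δ`-connected set of the form `⟦X|y⟧`,
any two distinct members overlap with uncertainty at most `δ · m(⟦X⟧)`, and every
conditional range `⟦X|y⟧` is contained in some member. -/
def IsOverlapFamily (mX : Set 𝒳 → ℝ) (X : Ω → 𝒳) (Y : Ω → 𝒴) (δ : ℝ)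
    (F : Set (Set 𝒳)) : Prop :=
  ⋃₀ F = Set.range X ∧
  (∀ S ∈ F, (∀ x₁ ∈ S, ∀ x₂ ∈ S, Conn mX X Y δ x₁ x₂) ∧
    ∃ y ∈ Set.range Y, condRange X Y y ⊆ S) ∧
  (∀ S₁ ∈ F, ∀ S₂ ∈ F, S₁ ≠ S₂ → mX (S₁ ∩ S₂) ≤ δ * mX (Set.range X)) ∧
  ∀ y ∈ Set.range Y, ∃ S ∈ F, condRange X Y y ⊆ S


/-- the step relation: two conditioning values whose conditional ranges meet. -/
def RRel (X : Ω → 𝒳) (Y : Ω → 𝒴) (y₁ y₂ : 𝒴) : Prop :=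
  (condRange X Y y₁ ∩ condRange X Y y₂).Nonempty

lemma chain_rtg {α : Type*} {R : α → α → Prop} :
    ∀ (N : ℕ) (ys : Fin (N + 1) → α),
      (∀ i : Fin N, R (ys i.castSucc) (ys i.succ)) →
      Relation.ReflTransGen R (ys 0) (ys (Fin.last N))
  | 0, ys, _ => by
      have : (Fin.last 0) = (0 : Fin 1) := rfl
      rw [this]
  | (N+1), ys, h => by
      have ih := chain_rtg N (fun j => ys j.castSucc) (fun i => by
        have := h i.castSucc
        rwa [Fin.succ_castSucc] at this)
      simp only [Fin.castSucc_zero] at ih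
      have hlast := h (Fin.last N)
      have hls : (Fin.last N).succ = Fin.last (N+1) := rfl
      rw [hls] at hlast
      exact ih.tail hlast

lemma mem_range_of_mem_condRange {X : Ω → 𝒳} {Y : Ω → 𝒴} {x : 𝒳} {y : 𝒴}
    (h : x ∈ condRange X Y y) : y ∈ Set.range Y := by
  obtain ⟨ω, hω, -⟩ := h
  exact ⟨ω, hω⟩

lemma conn_to_reach {m : Set 𝒳 → ℝ} {X : Ω → 𝒳} {Y : Ω → 𝒴}
    (hm : IsUncertaintyFn m) {x₁ x₂ : 𝒳} (h : Conn m X Y 0 x₁ x₂) :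
    ∃ a b : 𝒴, x₁ ∈ condRange X Y a ∧ x₂ ∈ condRange X Y b ∧
      Relation.ReflTransGen (RRel X Y) a b := by
  obtain ⟨N, ys, h1, h2, hstep⟩ := h
  refine ⟨ys 0, ys (Fin.last N), h1, h2, chain_rtg N ys ?_⟩
  intro i
  have hs := hstep i
  by_contra hne
  rw [RRel, Set.not_nonempty_iff_eq_empty, Set.inter_comm] at hne
  rw [hne, hm.1, zero_div] at hs
  exact lt_irrefl 0 hs

section Family

variable {m : Set 𝒳 → ℝ} {X : Ω → 𝒳} {Y : Ω → 𝒴} {F : Set (Set 𝒳)}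
variable (hm : IsUncertaintyFn m) (hF : IsOverlapFamily m X Y 0 F)

include hm hF in
lemma family_eq_of_mem {S₁ S₂ : Set 𝒳} {x : 𝒳} (hS₁ : S₁ ∈ F) (hS₂ : S₂ ∈ F)
    (h₁ : x ∈ S₁) (h₂ : x ∈ S₂) : S₁ = S₂ := by
  by_contra hne
  have hb := hF.2.2.1 S₁ hS₁ S₂ hS₂ hne
  have hpos := hm.2.1 (S₁ ∩ S₂) ⟨x, h₁, h₂⟩
  rw [zero_mul] at hb
  linarith

include hF in
lemma family_mem_nonempty {S : Set 𝒳} (hS : S ∈ F) : ∃ ω : Ω, X ω ∈ S := by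
  obtain ⟨y, hy, hsub⟩ := (hF.2.1 S hS).2
  obtain ⟨ω, hω⟩ := hy
  exact ⟨ω, hsub ⟨ω, hω, rfl⟩⟩

include hm hF in
lemma reach_same_member {S₁ S₂ : Set 𝒳} {x₁ x₂ : 𝒳} (hS₁ : S₁ ∈ F) (hS₂ : S₂ ∈ F)
    (h₁ : x₁ ∈ S₁) (h₂ : x₂ ∈ S₂) {a b : 𝒴}
    (ha : x₁ ∈ condRange X Y a) (hb : x₂ ∈ condRange X Y b)
    (hr : Relation.ReflTransGen (RRel X Y) a b) : S₁ = S₂ := by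
  induction hr generalizing S₂ x₂ with
  | refl =>
      obtain ⟨T, hT, hsub⟩ := hF.2.2.2 a (mem_range_of_mem_condRange ha)
      exact (family_eq_of_mem hm hF hS₁ hT h₁ (hsub ha)).trans
        (family_eq_of_mem hm hF hT hS₂ (hsub hb) h₂)
  | tail hr' hstep ih =>
      obtain ⟨z, hz1, hz2⟩ := hstep
      obtain ⟨T, hT, hsub⟩ := hF.2.2.2 _ (mem_range_of_mem_condRange hz1)
      have h1T : S₁ = T := ih hT (hsub hz1) hz1
      obtain ⟨T', hT', hsub'⟩ := hF.2.2.2 _ (mem_range_of_mem_condRange hz2)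
      have hTT' : T = T' := family_eq_of_mem hm hF hT hT' (hsub hz1) (hsub' hz2)
      have h2T' : S₂ = T' := family_eq_of_mem hm hF hS₂ hT' h₂ (hsub' hb)
      rw [h1T, hTT', h2T']

end Family

/-- Corollary 1: under the product and union-bound assumptions,
for a stationary memoryless uncertain channel the zero-error mutual information
factorizes exactly: `I₀(Y(1:n);X(1:n)) = Σᵢ I₀(Y(i);X(i))`, where `I₀` is the
base-two logarithm of the cardinality of the `0`-overlap family. -/
theorem zero_error_information_factorizes
    {Ω 𝒳 𝒴 : Type*} {n : ℕ}
    (m1 : Set 𝒴 → ℝ) (mn : Set (Fin n → 𝒴) → ℝ) (mXn : Set (Fin n → 𝒳) → ℝ)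
    (hm1 : IsUncertaintyFn m1) (hmn : IsUncertaintyFn mn)
    (hmXn : IsUncertaintyFn mXn)
    (hprod : ∀ S : Fin n → Set 𝒴, mn (Set.univ.pi S) = ∏ i, m1 (S i))
    (hsub1 : ∀ S₁ S₂ : Set 𝒴, m1 (S₁ ∪ S₂) ≤ m1 S₁ + m1 S₂)
    (hsubn : ∀ S₁ S₂ : Set (Fin n → 𝒴), mn (S₁ ∪ S₂) ≤ mn S₁ + mn S₂)
    (Xv : Ω → Fin n → 𝒳) (Yv : Ω → Fin n → 𝒴)
    (hX : Set.range Xv = Set.univ.pi fun i => Set.range fun ω => Xv ω i)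
    (hY : ∀ xv ∈ Set.range Xv,
      condRange Yv Xv xv =
        Set.univ.pi fun i =>
          condRange (fun ω => Yv ω i) (fun ω => Xv ω i) (xv i))
    (hdich : Disassociated mXn mn Xv Yv 0 0 ∨ Associated mXn mn Xv Yv 1 0)
    (Fn : Set (Set (Fin n → 𝒴))) (hFn : IsOverlapFamily mn Yv Xv 0 Fn)
    (hFnfin : Fn.Finite)
    (F : Fin n → Set (Set 𝒴))
    (hF : ∀ i, IsOverlapFamily m1 (fun ω => Yv ω i) (fun ω => Xv ω i) 0 (F i))
    (hFfin : ∀ i, (F i).Finite) :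
    Real.logb 2 (Fn.ncard : ℝ) = ∑ i, Real.logb 2 ((F i).ncard : ℝ) := by
  classical
  obtain hO | hO := isEmpty_or_nonempty Ω
  · -- degenerate case: no outcomes, both families are empty
    have hFn0 : Fn = ∅ := by
      ext S
      simp only [Set.mem_empty_iff_false, iff_false]
      intro hS
      obtain ⟨y, hy, -⟩ := (hFn.2.1 S hS).2
      obtain ⟨ω, -⟩ := hy
      exact (IsEmpty.false ω)
    have hFi : ∀ i, F i = ∅ := by
      intro i
      ext S
      simp only [Set.mem_empty_iff_false, iff_false]
      intro hS
      obtain ⟨y, hy, -⟩ := ((hF i).2.1 S hS).2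
      obtain ⟨ω, -⟩ := hy
      exact (IsEmpty.false ω)
    simp [hFn0, hFi]
  · -- main case
    have hxrange : ∀ x : Fin n → 𝒳,
        (∀ i, (condRange (fun ω => Yv ω i) (fun ω => Xv ω i) (x i)).Nonempty) →
        x ∈ Set.range Xv := by
      intro x hx
      rw [hX, Set.mem_univ_pi]
      intro i
      obtain ⟨y, ω, hω, -⟩ := hx i
      exact ⟨ω, hω⟩
    have update_step : ∀ (x : Fin n → 𝒳) (j : Fin n) (b c : 𝒳),
        (∀ i, (condRange (fun ω => Yv ω i) (fun ω => Xv ω i) (x i)).Nonempty) →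
        (condRange (fun ω => Yv ω j) (fun ω => Xv ω j) b ∩
          condRange (fun ω => Yv ω j) (fun ω => Xv ω j) c).Nonempty →
        RRel Yv Xv (Function.update x j b) (Function.update x j c) := by
      intro x j b c hne hbc
      have hub : ∀ i, (condRange (fun ω => Yv ω i) (fun ω => Xv ω i)
          (Function.update x j b i)).Nonempty := by
        intro i
        rcases eq_or_ne i j with rfl | hij
        · rw [Function.update_self]
          exact hbc.mono Set.inter_subset_left
        · rw [Function.update_of_ne hij]
          exact hne i
      have huc : ∀ i, (condRange (fun ω => Yv ω i) (fun ω => Xv ω i)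
          (Function.update x j c i)).Nonempty := by
        intro i
        rcases eq_or_ne i j with rfl | hij
        · rw [Function.update_self]
          exact hbc.mono Set.inter_subset_right
        · rw [Function.update_of_ne hij]
          exact hne i
      show (condRange Yv Xv (Function.update x j b) ∩
        condRange Yv Xv (Function.update x j c)).Nonempty
      rw [hY _ (hxrange _ hub), hY _ (hxrange _ huc)]
      obtain ⟨z, hz1, hz2⟩ := hbc
      choose wz hwz using hne
      refine ⟨Function.update wz j z, ?_, ?_⟩
      · rw [Set.mem_univ_pi]
        intro i
        rcases eq_or_ne i j with rfl | hij
        · simp only [Function.update_self]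
          exact hz1
        · simp only [Function.update_of_ne hij]
          exact hwz i
      · rw [Set.mem_univ_pi]
        intro i
        rcases eq_or_ne i j with rfl | hij
        · simp only [Function.update_self]
          exact hz2
        · simp only [Function.update_of_ne hij]
          exact hwz i
    have update_reach : ∀ (x : Fin n → 𝒳) (j : Fin n) (b : 𝒳),
        (∀ i, (condRange (fun ω => Yv ω i) (fun ω => Xv ω i) (x i)).Nonempty) →
        Relation.ReflTransGen (RRel (fun ω => Yv ω j) (fun ω => Xv ω j)) (x j) b →
        Relation.ReflTransGen (RRel Yv Xv) x (Function.update x j b) := by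
      intro x j b hne hr
      induction hr with
      | refl =>
          rw [Function.update_eq_self]
      | tail hr' hstep ih =>
          exact ih.tail (update_step x j _ _ hne hstep)
    have pi_reach : ∀ x₁ x₂ : Fin n → 𝒳,
        (∀ i, (condRange (fun ω => Yv ω i) (fun ω => Xv ω i) (x₁ i)).Nonempty) →
        (∀ i, (condRange (fun ω => Yv ω i) (fun ω => Xv ω i) (x₂ i)).Nonempty) →
        (∀ i, Relation.ReflTransGen (RRel (fun ω => Yv ω i) (fun ω => Xv ω i))
          (x₁ i) (x₂ i)) →
        Relation.ReflTransGen (RRel Yv Xv) x₁ x₂ := by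
      intro x₁ x₂ h1 h2 h
      have main : ∀ s : Finset (Fin n), Relation.ReflTransGen (RRel Yv Xv) x₁
          (fun i => if i ∈ s then x₂ i else x₁ i) := by
        intro s
        induction s using Finset.induction_on with
        | empty => simpa using Relation.ReflTransGen.refl
        | @insert j s hj ih =>
            have hz : ∀ i, (condRange (fun ω => Yv ω i) (fun ω => Xv ω i)
                (if i ∈ s then x₂ i else x₁ i)).Nonempty := by
              intro i
              split_ifs
              · exact h2 i
              · exact h1 i
            have heq : (fun i => if i ∈ insert j s then x₂ i else x₁ i)
                = Function.update (fun i => if i ∈ s then x₂ i else x₁ i) j (x₂ j) := by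
              funext i
              rcases eq_or_ne i j with rfl | hij
              · simp [hj]
              · simp [Function.update_of_ne hij, Finset.mem_insert, hij]
            rw [heq]
            refine ih.trans (update_reach _ j _ hz ?_)
            rw [if_neg hj]
            exact h j
      have h' := main Finset.univ
      simpa using h'
    -- the bijection between the product family and the product of the families
    have hwex : ∀ S : ↥Fn, ∃ ω, Yv ω ∈ (S : Set (Fin n → 𝒴)) :=
      fun S => family_mem_nonempty hFn S.2
    choose w hw using hwex
    have hgex : ∀ (i : Fin n) (ω : Ω), ∃ T, T ∈ F i ∧ Yv ω i ∈ T := by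
      intro i ω
      obtain ⟨T, hT, hsub⟩ := (hF i).2.2.2 (Xv ω i) ⟨ω, rfl⟩
      exact ⟨T, hT, hsub ⟨ω, rfl, rfl⟩⟩
    choose g hg1 hg2 using hgex
    let f : ↥Fn → ∀ i, ↥(F i) := fun S i => ⟨g i (w S), hg1 i (w S)⟩
    have hinj : Function.Injective f := by
      intro S S' hff
      have hcoord : ∀ i, Relation.ReflTransGen
          (RRel (fun ω => Yv ω i) (fun ω => Xv ω i)) (Xv (w S) i) (Xv (w S') i) := by
        intro i
        have hTeq : g i (w S) = g i (w S') := congrArg Subtype.val (congrFun hff i)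
        have hconn : Conn m1 (fun ω => Yv ω i) (fun ω => Xv ω i) 0
            (Yv (w S) i) (Yv (w S') i) := by
          refine ((hF i).2.1 _ (hg1 i (w S))).1 _ (hg2 i (w S)) _ ?_
          rw [hTeq]
          exact hg2 i (w S')
        obtain ⟨a, b, ha, hb, hr⟩ := conn_to_reach hm1 hconn
        exact (Relation.ReflTransGen.head
            ⟨Yv (w S) i, ⟨w S, rfl, rfl⟩, ha⟩ hr).tail
          ⟨Yv (w S') i, hb, ⟨w S', rfl, rfl⟩⟩
      have hR : Relation.ReflTransGen (RRel Yv Xv) (Xv (w S)) (Xv (w S')) :=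
        pi_reach _ _ (fun i => ⟨Yv (w S) i, w S, rfl, rfl⟩)
          (fun i => ⟨Yv (w S') i, w S', rfl, rfl⟩) hcoord
      exact Subtype.ext (reach_same_member hmn hFn S.2 S'.2 (hw S) (hw S')
        ⟨w S, rfl, rfl⟩ ⟨w S', rfl, rfl⟩ hR)
    have hsurj : Function.Surjective f := by
      intro T
      have hpick : ∀ i, ∃ ω, Yv ω i ∈ (T i : Set 𝒴) :=
        fun i => family_mem_nonempty (hF i) (T i).2
      choose ωp hωp using hpick
      have hxr : (fun i => Xv (ωp i) i) ∈ Set.range Xv := by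
        rw [hX, Set.mem_univ_pi]
        exact fun i => ⟨ωp i, rfl⟩
      obtain ⟨S, hS, hsub⟩ := hFn.2.2.2 _ hxr
      have hymem : (fun i => Yv (ωp i) i) ∈ condRange Yv Xv (fun i => Xv (ωp i) i) := by
        rw [hY _ hxr, Set.mem_univ_pi]
        exact fun i => ⟨ωp i, rfl, rfl⟩
      have hyS : (fun i => Yv (ωp i) i) ∈ S := hsub hymem
      refine ⟨⟨S, hS⟩, ?_⟩
      funext i
      apply Subtype.ext
      show g i (w ⟨S, hS⟩) = (T i : Set 𝒴)
      have hconn : Conn mn Yv Xv 0 (Yv (w ⟨S, hS⟩)) (fun i => Yv (ωp i) i) :=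
        (hFn.2.1 S hS).1 _ (hw ⟨S, hS⟩) _ hyS
      obtain ⟨a, b, ha, hb, hr⟩ := conn_to_reach hmn hconn
      have hproj : ∀ u v, RRel Yv Xv u v →
          RRel (fun ω => Yv ω i) (fun ω => Xv ω i) (u i) (v i) := by
        rintro u v ⟨z, ⟨ω₁, hω₁, hz₁⟩, ⟨ω₂, hω₂, hz₂⟩⟩
        exact ⟨z i, ⟨ω₁, congrFun hω₁ i, congrFun hz₁ i⟩,
          ⟨ω₂, congrFun hω₂ i, congrFun hz₂ i⟩⟩
      have hri : Relation.ReflTransGen (RRel (fun ω => Yv ω i) (fun ω => Xv ω i)) (a i) (b i) :=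
        Relation.ReflTransGen.lift (fun v : Fin n → 𝒳 => v i) hproj _ _ hr
      obtain ⟨ω₁, hω₁, hz₁⟩ := ha
      obtain ⟨ω₂, hω₂, hz₂⟩ := hb
      have ha' : Yv (w ⟨S, hS⟩) i ∈
          condRange (fun ω => Yv ω i) (fun ω => Xv ω i) (a i) :=
        ⟨ω₁, congrFun hω₁ i, congrFun hz₁ i⟩
      have hb' : Yv (ωp i) i ∈
          condRange (fun ω => Yv ω i) (fun ω => Xv ω i) (b i) :=
        ⟨ω₂, congrFun hω₂ i, congrFun hz₂ i⟩
      have hfull : Relation.ReflTransGen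
          (RRel (fun ω => Yv ω i) (fun ω => Xv ω i))
          (Xv (w ⟨S, hS⟩) i) (Xv (ωp i) i) :=
        (Relation.ReflTransGen.head
            ⟨Yv (w ⟨S, hS⟩) i, ⟨w ⟨S, hS⟩, rfl, rfl⟩, ha'⟩ hri).tail
          ⟨Yv (ωp i) i, hb', ⟨ωp i, rfl, rfl⟩⟩
      exact reach_same_member hm1 (hF i) (hg1 i (w ⟨S, hS⟩)) (T i).2
        (hg2 i (w ⟨S, hS⟩)) (hωp i) ⟨w ⟨S, hS⟩, rfl, rfl⟩ ⟨ωp i, rfl, rfl⟩ hfull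
    haveI := hFnfin.to_subtype
    haveI : ∀ i, Finite ↥(F i) := fun i => (hFfin i).to_subtype
    have hcard : Fn.ncard = ∏ i, (F i).ncard := by
      rw [← Nat.card_coe_set_eq,
        Nat.card_congr (Equiv.ofBijective f ⟨hinj, hsurj⟩), Nat.card_pi]
      exact Finset.prod_congr rfl fun i _ => Nat.card_coe_set_eq _
    have hFine : ∀ i, (F i).ncard ≠ 0 := by
      intro i
      have hne : (F i).Nonempty := by
        by_contra h
        rw [Set.not_nonempty_iff_eq_empty] at h
        have h1 := (hF i).1
        rw [h, Set.sUnion_empty] at h1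
        exact absurd (Set.range_nonempty (fun ω => Yv ω i)) (by rw [← h1]; simp)
      exact ((Set.ncard_pos (hFfin i)).2 hne).ne'
    rw [hcard, Nat.cast_prod]
    rw [Real.logb, Real.log_prod (fun i _ => Nat.cast_ne_zero.2 (hFine i)),
      Finset.sum_div]
    rfl


end NSIT
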